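/- arXiv:math/0508570 — 2 statements merged into one kernel-verified Lean document; each statement's English description precedes it below -/
import Mathlib

section
/- For all integers n ≥ 1 and all k ≥ 0, the coefficients R_{k,m} satisfy the recursion R_{k,2n+1} = (k+1)·R_{k+1,2n} + (2n+1−k)·R_{k,2n}. -/
namespace DescentParity

/-- Number of descent positions i (1-indexed adjacent pairs) of a permutation of {1,…,m}
    whose first (larger) entry is even. Entries of `Fin m` represent values via `(·:ℕ)+1`. -/
def desBegE (m : ℕ) (σ : Equiv.Perm (Fin m)) : ℕ :=
  (Finset.univ.filter (fun p : Fin m × Fin m =>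
    (p.2 : ℕ) = (p.1 : ℕ) + 1 ∧ σ p.2 < σ p.1 ∧ Even ((σ p.1 : ℕ) + 1))).card

def desEndE (m : ℕ) (σ : Equiv.Perm (Fin m)) : ℕ :=
  (Finset.univ.filter (fun p : Fin m × Fin m =>
    (p.2 : ℕ) = (p.1 : ℕ) + 1 ∧ σ p.2 < σ p.1 ∧ Even ((σ p.2 : ℕ) + 1))).card

def desBegO (m : ℕ) (σ : Equiv.Perm (Fin m)) : ℕ :=
  (Finset.univ.filter (fun p : Fin m × Fin m =>
    (p.2 : ℕ) = (p.1 : ℕ) + 1 ∧ σ p.2 < σ p.1 ∧ Odd ((σ p.1 : ℕ) + 1))).card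

def desEndO (m : ℕ) (σ : Equiv.Perm (Fin m)) : ℕ :=
  (Finset.univ.filter (fun p : Fin m × Fin m =>
    (p.2 : ℕ) = (p.1 : ℕ) + 1 ∧ σ p.2 < σ p.1 ∧ Odd ((σ p.2 : ℕ) + 1))).card

/-- The first entry σ₁ of the permutation is even. -/
def firstEven (m : ℕ) (σ : Equiv.Perm (Fin m)) : Prop :=
  ∃ i : Fin m, (i : ℕ) = 0 ∧ Even ((σ i : ℕ) + 1)

def firstOdd (m : ℕ) (σ : Equiv.Perm (Fin m)) : Prop :=
  ∃ i : Fin m, (i : ℕ) = 0 ∧ Odd ((σ i : ℕ) + 1)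

instance (m : ℕ) (σ : Equiv.Perm (Fin m)) : Decidable (firstEven m σ) := by
  unfold firstEven; infer_instance

instance (m : ℕ) (σ : Equiv.Perm (Fin m)) : Decidable (firstOdd m σ) := by
  unfold firstOdd; infer_instance

def R (k m : ℕ) : ℕ :=
  (Finset.univ.filter (fun σ : Equiv.Perm (Fin m) => desBegE m σ = k)).card

def M (k m : ℕ) : ℕ :=
  (Finset.univ.filter (fun σ : Equiv.Perm (Fin m) => desBegO m σ = k)).card

def P0 (k m : ℕ) : ℕ :=
  (Finset.univ.filter (fun σ : Equiv.Perm (Fin m) => firstOdd m σ ∧ desEndE m σ = k)).card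

def P1 (k m : ℕ) : ℕ :=
  (Finset.univ.filter (fun σ : Equiv.Perm (Fin m) => firstEven m σ ∧ desEndE m σ = k)).card

def Q0 (k m : ℕ) : ℕ :=
  (Finset.univ.filter (fun σ : Equiv.Perm (Fin m) => firstEven m σ ∧ desEndO m σ = k)).card

def Q1 (k m : ℕ) : ℕ :=
  (Finset.univ.filter (fun σ : Equiv.Perm (Fin m) => firstOdd m σ ∧ desEndO m σ = k)).card

/-! ### Auxiliary development -/

open Finset

/-- The set of starting positions of descents with even top. -/
def dsetE (m : ℕ) (σ : Equiv.Perm (Fin m)) : Finset (Fin m) :=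
  Finset.univ.filter (fun i : Fin m =>
    ∃ j : Fin m, (j : ℕ) = (i : ℕ) + 1 ∧ σ j < σ i ∧ Even ((σ i : ℕ) + 1))

lemma desBegE_eq_card (m : ℕ) (σ : Equiv.Perm (Fin m)) :
    desBegE m σ = (dsetE m σ).card := by
  classical
  unfold desBegE dsetE
  apply Finset.card_nbij (fun p => p.1)
  · intro p hp
    simp only [Finset.coe_filter, Set.mem_setOf_eq, Finset.mem_filter, Finset.mem_univ, true_and] at hp ⊢
    exact ⟨p.2, hp.1, hp.2⟩
  · intro p hp q hq h
    have h' : p.1 = q.1 := h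
    simp only [Finset.coe_filter, Finset.mem_univ, true_and, Set.mem_setOf_eq] at hp hq
    have h2 : p.2 = q.2 := by
      apply Fin.ext
      rw [hp.1, hq.1, h']
    exact Prod.ext h' h2
  · intro i hi
    simp only [Finset.coe_filter, Finset.mem_univ, true_and, Set.mem_setOf_eq] at hi
    obtain ⟨j, h1, h2, h3⟩ := hi
    refine ⟨(i, j), ?_, rfl⟩
    simp only [Finset.coe_filter, Set.mem_setOf_eq, Finset.mem_univ, true_and, and_true]
    exact ⟨h1, h2, h3⟩

variable {m : ℕ}

/-- Insert the largest value at position `j`. -/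
def ins (σ : Equiv.Perm (Fin m)) (j : Fin (m + 1)) : Equiv.Perm (Fin (m + 1)) :=
  (finSuccEquiv' j).trans ((Equiv.optionCongr σ).trans (finSuccEquiv' (Fin.last m)).symm)

@[simp] lemma ins_self (σ : Equiv.Perm (Fin m)) (j : Fin (m + 1)) :
    ins σ j j = Fin.last m := by
  simp [ins, finSuccEquiv'_at, finSuccEquiv'_symm_none]

@[simp] lemma ins_succAbove (σ : Equiv.Perm (Fin m)) (j : Fin (m + 1)) (i : Fin m) :
    ins σ j (j.succAbove i) = (σ i).castSucc := by
  simp [ins, finSuccEquiv'_succAbove, finSuccEquiv'_symm_some]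

lemma succAbove_val (j : Fin (m + 1)) (i : Fin m) :
    ((j.succAbove i : Fin (m + 1)) : ℕ) = if (i : ℕ) < (j : ℕ) then (i : ℕ) else (i : ℕ) + 1 := by
  rcases lt_or_ge (i.castSucc) j with h | h
  · rw [Fin.succAbove_of_castSucc_lt _ _ h]
    have : (i : ℕ) < (j : ℕ) := by simpa [Fin.lt_def] using h
    simp [this]
  · rw [Fin.succAbove_of_le_castSucc _ _ h]
    have : ¬ (i : ℕ) < (j : ℕ) := by
      have := Fin.le_def.mp h
      simp only [Fin.coe_castSucc] at this
      omega
    simp [this]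

lemma dsetE_ins (hm : Even m) (σ : Equiv.Perm (Fin m)) (j : Fin (m + 1)) :
    dsetE (m + 1) (ins σ j) =
      ((dsetE m σ).filter (fun i : Fin m => (i : ℕ) + 1 ≠ (j : ℕ))).image j.succAbove := by
  classical
  ext a
  simp only [dsetE, Finset.mem_image, Finset.mem_filter, Finset.mem_univ, true_and]
  constructor
  · rintro ⟨b, hb, hlt, hev⟩
    by_cases haj : a = j
    · exfalso
      rw [haj, ins_self] at hev
      simp only [Fin.val_last] at hev
      obtain ⟨r, hr⟩ := hm
      obtain ⟨s, hs⟩ := hev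
      omega
    by_cases hbj : b = j
    · exfalso
      rw [hbj, ins_self] at hlt
      exact absurd hlt (Fin.le_last _).not_gt
    obtain ⟨i, rfl⟩ := Fin.exists_succAbove_eq haj
    obtain ⟨i', rfl⟩ := Fin.exists_succAbove_eq hbj
    rw [ins_succAbove, ins_succAbove] at hlt
    rw [ins_succAbove] at hev
    have hvi := succAbove_val j i
    have hvi' := succAbove_val j i'
    have hij : (i' : ℕ) = (i : ℕ) + 1 ∧ (i : ℕ) + 1 ≠ (j : ℕ) := by
      split_ifs at hvi hvi' <;> omega
    refine ⟨i, ⟨⟨i', hij.1, by simpa using hlt, by simpa using hev⟩, hij.2⟩, rfl⟩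
  · rintro ⟨i, ⟨⟨i', hval, hlt, hev⟩, hne⟩, rfl⟩
    refine ⟨j.succAbove i', ?_, ?_, ?_⟩
    · have hvi := succAbove_val j i
      have hvi' := succAbove_val j i'
      split_ifs at hvi hvi' <;> omega
    · rw [ins_succAbove, ins_succAbove]
      exact Fin.castSucc_lt_castSucc_iff.mpr hlt
    · rw [ins_succAbove]
      simpa using hev

/-- Positions which split a descent with even top. -/
def splitSet (σ : Equiv.Perm (Fin m)) : Finset (Fin (m + 1)) :=
  (dsetE m σ).image Fin.succ

lemma card_splitSet (σ : Equiv.Perm (Fin m)) :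
    (splitSet σ).card = (dsetE m σ).card :=
  Finset.card_image_of_injective _ (Fin.succ_injective _)

lemma card_dsetE_ins (hm : Even m) (σ : Equiv.Perm (Fin m)) (j : Fin (m + 1)) :
    (dsetE (m + 1) (ins σ j)).card
      = (dsetE m σ).card - (if j ∈ splitSet σ then 1 else 0) := by
  classical
  rw [dsetE_ins hm, Finset.card_image_of_injective _ Fin.succAbove_right_injective]
  by_cases hj : j ∈ splitSet σ
  · simp only [hj, if_true]
    obtain ⟨i0, hi0, rfl⟩ := Finset.mem_image.mp hj
    have heq : (dsetE m σ).filter (fun i : Fin m => (i : ℕ) + 1 ≠ ((Fin.succ i0 : Fin (m+1)) : ℕ))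
        = (dsetE m σ).erase i0 := by
      ext x
      simp only [Finset.mem_filter, Finset.mem_erase, Fin.val_succ]
      constructor
      · rintro ⟨hx, hne⟩
        refine ⟨fun h => hne ?_, hx⟩
        rw [h]
      · rintro ⟨hne, hx⟩
        refine ⟨hx, fun h => hne (Fin.ext (by omega))⟩
    rw [heq, Finset.card_erase_of_mem hi0]
  · simp only [hj, if_false, Nat.sub_zero]
    rw [Finset.filter_true_of_mem]
    intro x hx
    intro h
    exact hj (Finset.mem_image.mpr ⟨x, hx, Fin.ext (by simp [h])⟩)

lemma ins_injective :
    Function.Injective (fun x : Equiv.Perm (Fin m) × Fin (m + 1) => ins x.1 x.2) := by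
  rintro ⟨σ, j⟩ ⟨σ', j'⟩ h
  simp only at h
  have hj : j = j' := by
    have h1 : ins σ' j' j = Fin.last m := by rw [← h, ins_self]
    exact (ins σ' j').injective (h1.trans (ins_self σ' j').symm)
  subst hj
  have hσ : σ = σ' := by
    ext i
    have hc := congrArg (fun τ : Equiv.Perm (Fin (m+1)) => τ (j.succAbove i)) h
    simp only [ins_succAbove] at hc
    exact congrArg Fin.val (Fin.castSucc_injective m hc)
  rw [hσ]

noncomputable def insEquiv (m : ℕ) :
    (Equiv.Perm (Fin m) × Fin (m + 1)) ≃ Equiv.Perm (Fin (m + 1)) :=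
  Equiv.ofBijective (fun x => ins x.1 x.2)
    ((Fintype.bijective_iff_injective_and_card _).mpr ⟨ins_injective, by
      simp only [Fintype.card_prod, Fintype.card_perm, Fintype.card_fin, Nat.factorial_succ]
      ring⟩)

lemma cnt (hm : Even m) (σ : Equiv.Perm (Fin m)) (k : ℕ) :
    (Finset.univ.filter (fun j : Fin (m + 1) => (dsetE (m + 1) (ins σ j)).card = k)).card
      = if (dsetE m σ).card = k + 1 then k + 1
        else if (dsetE m σ).card = k then m + 1 - k else 0 := by
  classical
  split_ifs with h1 h2
  · have heq : Finset.univ.filter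
        (fun j : Fin (m + 1) => (dsetE (m + 1) (ins σ j)).card = k) = splitSet σ := by
      ext j
      simp only [Finset.mem_filter, Finset.mem_univ, true_and, card_dsetE_ins hm, h1]
      by_cases hj : j ∈ splitSet σ <;> simp [hj]
    rw [heq, card_splitSet, h1]
  · have heq : Finset.univ.filter
        (fun j : Fin (m + 1) => (dsetE (m + 1) (ins σ j)).card = k) = (splitSet σ)ᶜ := by
      ext j
      simp only [Finset.mem_filter, Finset.mem_univ, true_and, card_dsetE_ins hm, h2,
        Finset.mem_compl]
      by_cases hj : j ∈ splitSet σ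
      · have hk : 1 ≤ k := by
          rw [← h2, ← card_splitSet σ]
          exact Finset.card_pos.mpr ⟨j, hj⟩
        simp only [hj, if_true, not_true, iff_false]
        omega
      · simp [hj]
    rw [heq, Finset.card_compl, card_splitSet, h2, Fintype.card_fin]
  · have heq : Finset.univ.filter
        (fun j : Fin (m + 1) => (dsetE (m + 1) (ins σ j)).card = k) = ∅ := by
      ext j
      simp only [Finset.mem_filter, Finset.mem_univ, true_and, card_dsetE_ins hm,
        Finset.notMem_empty, iff_false]
      by_cases hj : j ∈ splitSet σ
      · have hpos : 1 ≤ (dsetE m σ).card := by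
          rw [← card_splitSet σ]
          exact Finset.card_pos.mpr ⟨j, hj⟩
        simp only [hj, if_true]
        omega
      · simp only [hj, if_false]
        omega
    rw [heq, Finset.card_empty]

lemma R_succ (hm : Even m) (k : ℕ) :
    R k (m + 1) = (k + 1) * R (k + 1) m + (m + 1 - k) * R k m := by
  classical
  unfold R
  have hfil : ∀ (l c : ℕ),
      (Finset.univ.filter (fun σ : Equiv.Perm (Fin l) => desBegE l σ = c))
        = (Finset.univ.filter (fun σ : Equiv.Perm (Fin l) => (dsetE l σ).card = c)) := by
    intro l c
    apply Finset.filter_congr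
    intro σ _
    simp [desBegE_eq_card]
  rw [hfil, hfil, hfil]
  rw [Finset.card_filter]
  rw [← Equiv.sum_comp (insEquiv m)
    (fun τ => if (dsetE (m + 1) τ).card = k then 1 else 0)]
  have hins : ∀ x : Equiv.Perm (Fin m) × Fin (m + 1), insEquiv m x = ins x.1 x.2 := fun _ => rfl
  simp only [hins]
  rw [Fintype.sum_prod_type]
  have step : ∀ σ : Equiv.Perm (Fin m),
      (∑ j : Fin (m + 1), if (dsetE (m + 1) (ins σ j)).card = k then 1 else 0)
        = (if (dsetE m σ).card = k + 1 then k + 1 else 0)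
          + (if (dsetE m σ).card = k then m + 1 - k else 0) := by
    intro σ
    rw [← Finset.card_filter, cnt hm σ k]
    split_ifs <;> omega
  rw [Finset.sum_congr rfl (fun σ _ => step σ)]
  rw [Finset.sum_add_distrib, ← Finset.sum_filter, ← Finset.sum_filter,
    Finset.sum_const, Finset.sum_const, smul_eq_mul, smul_eq_mul]
  ring

lemma dsetE_card_le (σ : Equiv.Perm (Fin (m + 1))) : (dsetE (m + 1) σ).card ≤ m := by
  classical
  have hsub : dsetE (m + 1) σ ⊆ Finset.univ.erase (Fin.last m) := by
    intro i hi
    simp only [dsetE, Finset.mem_filter, Finset.mem_univ, true_and] at hi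
    obtain ⟨j, hj, -⟩ := hi
    refine Finset.mem_erase.mpr ⟨?_, Finset.mem_univ _⟩
    intro h
    have hjle : (j : ℕ) < m + 1 := j.isLt
    have : (i : ℕ) = m := by rw [h]; rfl
    omega
  calc (dsetE (m + 1) σ).card ≤ (Finset.univ.erase (Fin.last m)).card :=
        Finset.card_le_card hsub
    _ = m := by
        rw [Finset.card_erase_of_mem (Finset.mem_univ _), Finset.card_univ, Fintype.card_fin]
        omega

lemma R_zero (k : ℕ) (h : m < k) : R k (m + 1) = 0 := by
  classical
  unfold R
  rw [Finset.card_eq_zero, Finset.filter_eq_empty_iff]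
  intro σ _
  rw [desBegE_eq_card]
  have hle := dsetE_card_le σ
  omega

theorem stmt_0 (n k : ℕ) (hn : 1 ≤ n) :
    (R k (2*n+1) : ℤ) = ((k : ℤ) + 1) * R (k+1) (2*n) + ((2*n+1 : ℤ) - k) * R k (2*n) := by
  have hm : Even (2 * n) := even_two_mul n
  by_cases hk : k ≤ 2 * n
  · have h := R_succ hm k
    rw [h]
    have hk' : k ≤ 2 * n + 1 := by omega
    push_cast [Nat.cast_sub hk']
    ring
  · push_neg at hk
    have h1 : R k (2 * n + 1) = 0 := R_zero k (by omega)
    have h2 : R k (2 * n) = 0 := by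
      obtain ⟨m', hm'⟩ : ∃ m', 2 * n = m' + 1 := ⟨2 * n - 1, by omega⟩
      rw [hm']
      exact R_zero k (by omega)
    have h3 : R (k + 1) (2 * n) = 0 := by
      obtain ⟨m', hm'⟩ : ∃ m', 2 * n = m' + 1 := ⟨2 * n - 1, by omega⟩
      rw [hm']
      exact R_zero (k + 1) (by omega)
    rw [h1, h2, h3]
    simp

end DescentParity
end

section
/- For all integers n ≥ 1 and all k with 0 ≤ k ≤ n, R_{k,2n} = (binom(n,k))²·(n!)². -/
namespace DescentParity

def ind (a b : ℕ) : ℕ := if b < a ∧ Even (a+1) then 1 else 0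

def iopt : Option ℕ → Option ℕ → ℕ
  | some a, some b => ind a b
  | _, _ => 0

def lstat : List ℕ → ℕ
  | a :: b :: t => ind a b + lstat (b :: t)
  | _ => 0

lemma ind_le_one (a b : ℕ) : ind a b ≤ 1 := by unfold ind; split <;> omega

lemma iopt_le_one (o o' : Option ℕ) : iopt o o' ≤ 1 := by
  cases o <;> cases o' <;> simp [iopt, ind_le_one]

lemma lstat_cons (a : ℕ) (l : List ℕ) :
    lstat (a :: l) = iopt (some a) l.head? + lstat l := by
  cases l <;> simp [lstat, iopt]

lemma lstat_append (u v : List ℕ) :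
    lstat (u ++ v) = lstat u + iopt u.getLast? v.head? + lstat v := by
  induction u with
  | nil => simp [lstat, iopt]
  | cons a u ih =>
    cases u with
    | nil => simp [lstat, lstat_cons, iopt]
    | cons b u =>
      simp only [List.cons_append, lstat, List.append_eq] at *
      rw [ih, List.getLast?_cons_cons]
      ring

lemma insertIdx_eq_take_cons_drop (x : ℕ) :
    ∀ (p : ℕ) (l : List ℕ), p ≤ l.length →
      l.insertIdx p x = l.take p ++ x :: l.drop p
  | 0, l, _ => by simp
  | p+1, [], h => by simp at h
  | p+1, a :: l, h => by
    simp only [List.insertIdx_succ_cons, List.take_succ_cons, List.drop_succ_cons,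
      List.cons_append]
    rw [insertIdx_eq_take_cons_drop x p l (by simpa using h)]

/-- gap indicator : the descent indicator of the adjacent pair around gap `p`. -/
def gapInd (l : List ℕ) (p : ℕ) : ℕ := iopt ((l.take p).getLast?) ((l.drop p).head?)

lemma getLast?_take_succ : ∀ (l : List ℕ) (q : ℕ), q < l.length →
    (l.take (q+1)).getLast? = l[q]?
  | a :: l, 0, _ => by cases l <;> simp
  | a :: l, q+1, h => by
    simp only [List.take_succ_cons, List.getElem?_cons_succ]
    rw [← getLast?_take_succ l q (by simpa using h)]
    cases hl : l.take (q+1) with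
    | nil =>
      exfalso
      have h2 := congrArg List.length hl
      simp at h2 h
      subst h2
      simp at h
    | cons b t => simp [List.getLast?_cons_cons, hl]

lemma gapInd_succ (l : List ℕ) (q : ℕ) (h : q + 1 ≤ l.length) :
    gapInd l (q+1) = iopt l[q]? l[q+1]? := by
  simp only [gapInd]
  rw [List.head?_drop, getLast?_take_succ l q (by omega)]

lemma gapInd_zero (l : List ℕ) : gapInd l 0 = 0 := by simp [gapInd, iopt]

lemma gapInd_le_one (l : List ℕ) (p : ℕ) : gapInd l p = 0 ∨ gapInd l p = 1 := by
  have := iopt_le_one ((l.take p).getLast?) ((l.drop p).head?)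
  unfold gapInd
  omega

lemma gapInd_lt_length (l : List ℕ) (p : ℕ) (h : gapInd l p = 1) : p < l.length := by
  by_contra hc
  rw [gapInd, List.drop_eq_nil_of_le (by omega)] at h
  simp [iopt] at h

lemma lstat_insertIdx (l : List ℕ) (x p : ℕ) (hp : p ≤ l.length) (hx : ∀ y ∈ l, y < x) :
    lstat (l.insertIdx p x) + gapInd l p
      = lstat l + (if p < l.length then (if Even (x+1) then 1 else 0) else 0) := by
  rw [insertIdx_eq_take_cons_drop x p l hp]
  conv_rhs => rw [← List.take_append_drop p l]
  rw [lstat_append, lstat_append, lstat_cons]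
  have h1 : iopt (l.take p).getLast? (some x) = 0 := by
    cases hg : (l.take p).getLast? with
    | none => simp [iopt]
    | some a =>
      have ha : a ∈ l := List.mem_of_mem_take (List.mem_of_getLast? hg)
      have : ¬ (x < a) := by have := hx a ha; omega
      simp [iopt, ind, this]
  have h2 : iopt (some x) (l.drop p).head?
      = (if p < l.length then (if Even (x+1) then 1 else 0) else 0) := by
    by_cases hpl : p < l.length
    · have hne : l.drop p ≠ [] := by
        intro hc
        have := congrArg List.length hc
        simp at this
        omega
      cases hh : (l.drop p).head? with
      | none => exact absurd (List.head?_eq_none_iff.mp hh) hne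
      | some b =>
        have hb : b ∈ l := List.mem_of_mem_drop (List.mem_of_mem_head? hh)
        have hbx : b < x := hx b hb
        simp [iopt, ind, hbx, hpl]
    · rw [List.drop_eq_nil_of_le (by omega)]
      simp [iopt, hpl]
  simp only [List.head?_cons, List.take_append_drop]
  rw [h1, h2, gapInd]
  ring

lemma sum_iopt_eq_lstat (l : List ℕ) :
    ∑ i ∈ Finset.range l.length, iopt l[i]? l[i+1]? = lstat l := by
  induction l with
  | nil => simp [lstat]
  | cons a t ih =>
    rw [List.length_cons, Finset.sum_range_succ']
    simp only [List.getElem?_cons_succ, List.getElem?_cons_zero]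
    rw [ih, lstat_cons, ← List.head?_eq_getElem?]
    ring

lemma sum_gapInd (l : List ℕ) :
    ∑ p ∈ Finset.range (l.length + 1), gapInd l p = lstat l := by
  rw [Finset.sum_range_succ']
  rw [gapInd_zero, add_zero]
  rw [← sum_iopt_eq_lstat l]
  apply Finset.sum_congr rfl
  intro i hi
  simp only [Finset.mem_range] at hi
  exact gapInd_succ l i (by omega)

lemma card_gapInd_one (l : List ℕ) :
    ((Finset.range (l.length + 1)).filter (fun p => gapInd l p = 1)).card = lstat l := by
  rw [Finset.card_filter, ← sum_gapInd l]
  apply Finset.sum_congr rfl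
  intro p _
  have := gapInd_le_one l p
  rcases this with h | h <;> simp [h]

lemma gapInd_length (l : List ℕ) : gapInd l l.length = 0 := by
  rcases gapInd_le_one l l.length with h | h
  · exact h
  · exact absurd (gapInd_lt_length l _ h) (lt_irrefl _)

lemma cond_insert (l : List ℕ) (x k p : ℕ) (hp : p ≤ l.length) (hx : ∀ y ∈ l, y < x) :
    lstat (l.insertIdx p x) = k ↔
      lstat l + (if p < l.length then (if Even (x+1) then 1 else 0) else 0)
        = k + gapInd l p := by
  have E := lstat_insertIdx l x p hp hx
  omega

lemma count_insert_even (l : List ℕ) (x k : ℕ) (hx : ∀ y ∈ l, y < x) (he : Even (x+1)) :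
    ((Finset.range (l.length + 1)).filter
        (fun p => lstat (l.insertIdx p x) = k)).card
      = (if lstat l = k then k + 1 else 0)
        + (if lstat l + 1 = k then l.length - lstat l else 0) := by
  have hcond : ∀ p ≤ l.length, (lstat (l.insertIdx p x) = k ↔
      lstat l + (if p < l.length then 1 else 0) = k + gapInd l p) := by
    intro p hp
    rw [cond_insert l x k p hp hx]
    simp [he]
  by_cases hk1 : lstat l = k
  · have hne : ¬ (lstat l + 1 = k) := by omega
    rw [if_pos hk1, if_neg hne, add_zero]
    have hset : (Finset.range (l.length + 1)).filter
        (fun p => lstat (l.insertIdx p x) = k)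
        = insert l.length ((Finset.range (l.length + 1)).filter
            (fun p => gapInd l p = 1)) := by
      ext p
      simp only [Finset.mem_filter, Finset.mem_range, Finset.mem_insert]
      constructor
      · rintro ⟨hpr, hc⟩
        rw [hcond p (by omega)] at hc
        rcases gapInd_le_one l p with hg | hg
        · left
          by_contra hne'
          rw [hg, if_pos (by omega)] at hc
          omega
        · right; exact ⟨hpr, hg⟩
      · rintro (rfl | ⟨hpr, hg⟩)
        · refine ⟨by omega, ?_⟩
          rw [hcond _ le_rfl, gapInd_length]
          simp [hk1]
        · refine ⟨hpr, ?_⟩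
          rw [hcond p (by omega), hg, if_pos (gapInd_lt_length l p hg)]
          omega
    rw [hset, Finset.card_insert_of_notMem, card_gapInd_one, hk1]
    simp only [Finset.mem_filter]
    rintro ⟨-, hg⟩
    exact absurd (gapInd_lt_length l _ hg) (lt_irrefl _)
  · by_cases hk2 : lstat l + 1 = k
    · rw [if_neg hk1, if_pos hk2, zero_add]
      have hset : (Finset.range (l.length + 1)).filter
          (fun p => lstat (l.insertIdx p x) = k)
          = (Finset.range l.length).filter (fun p => gapInd l p = 0) := by
        ext p
        simp only [Finset.mem_filter, Finset.mem_range]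
        constructor
        · rintro ⟨hpr, hc⟩
          rw [hcond p (by omega)] at hc
          rcases gapInd_le_one l p with hg | hg
          · refine ⟨?_, hg⟩
            by_contra hne'
            rw [hg, if_neg (by omega)] at hc
            omega
          · rw [hg, if_pos (gapInd_lt_length l p hg)] at hc
            omega
        · rintro ⟨hpr, hg⟩
          refine ⟨by omega, ?_⟩
          rw [hcond p (by omega), hg, if_pos hpr]
          omega
      rw [hset]
      have h10 := Finset.card_filter_add_card_filter_not
        (s := Finset.range l.length) (p := fun p => gapInd l p = 1)
      have heq1 : (Finset.range l.length).filter (fun p => gapInd l p = 1)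
          = (Finset.range (l.length + 1)).filter (fun p => gapInd l p = 1) := by
        ext p
        simp only [Finset.mem_filter, Finset.mem_range]
        constructor
        · rintro ⟨h1, h2⟩; exact ⟨by omega, h2⟩
        · rintro ⟨h1, h2⟩; exact ⟨gapInd_lt_length l p h2, h2⟩
      have heq0 : (Finset.range l.length).filter (fun p => ¬ gapInd l p = 1)
          = (Finset.range l.length).filter (fun p => gapInd l p = 0) := by
        apply Finset.filter_congr
        intro p _
        rcases gapInd_le_one l p with h | h <;> simp [h]
      rw [heq0, heq1, card_gapInd_one] at h10
      rw [Finset.card_range] at h10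
      omega
    · rw [if_neg hk1, if_neg hk2, add_zero]
      rw [Finset.card_eq_zero, Finset.filter_eq_empty_iff]
      intro p hpr
      simp only [Finset.mem_range] at hpr
      rw [hcond p (by omega)]
      rcases gapInd_le_one l p with hg | hg
      · rw [hg]; split <;> omega
      · rw [hg, if_pos (gapInd_lt_length l p hg)]; omega

lemma count_insert_odd (l : List ℕ) (x k : ℕ) (hx : ∀ y ∈ l, y < x) (he : ¬ Even (x+1)) :
    ((Finset.range (l.length + 1)).filter
        (fun p => lstat (l.insertIdx p x) = k)).card
      = (if lstat l = k then l.length + 1 - k else 0)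
        + (if lstat l = k + 1 then k + 1 else 0) := by
  have hcond : ∀ p ≤ l.length, (lstat (l.insertIdx p x) = k ↔
      lstat l = k + gapInd l p) := by
    intro p hp
    rw [cond_insert l x k p hp hx]
    simp [he]
  by_cases hk1 : lstat l = k
  · have hne : ¬ (lstat l = k + 1) := by omega
    rw [if_pos hk1, if_neg hne, add_zero]
    have hset : (Finset.range (l.length + 1)).filter
        (fun p => lstat (l.insertIdx p x) = k)
        = (Finset.range (l.length + 1)).filter (fun p => ¬ gapInd l p = 1) := by
      apply Finset.filter_congr
      intro p hpr
      simp only [Finset.mem_range] at hpr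
      rw [hcond p (by omega)]
      rcases gapInd_le_one l p with hg | hg <;> simp [hg] <;> omega
    rw [hset]
    have h10 := Finset.card_filter_add_card_filter_not
      (s := Finset.range (l.length + 1)) (p := fun p => gapInd l p = 1)
    rw [card_gapInd_one, Finset.card_range] at h10
    omega
  · by_cases hk2 : lstat l = k + 1
    · rw [if_neg hk1, if_pos hk2, zero_add]
      have hset : (Finset.range (l.length + 1)).filter
          (fun p => lstat (l.insertIdx p x) = k)
          = (Finset.range (l.length + 1)).filter (fun p => gapInd l p = 1) := by
        apply Finset.filter_congr
        intro p hpr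
        simp only [Finset.mem_range] at hpr
        rw [hcond p (by omega)]
        rcases gapInd_le_one l p with hg | hg <;> simp [hg] <;> omega
      rw [hset, card_gapInd_one]
      omega
    · rw [if_neg hk1, if_neg hk2, add_zero]
      rw [Finset.card_eq_zero, Finset.filter_eq_empty_iff]
      intro p hpr
      simp only [Finset.mem_range] at hpr
      rw [hcond p (by omega)]
      rcases gapInd_le_one l p with hg | hg <;> rw [hg] <;> omega

def perms : ℕ → Finset (List ℕ)
  | 0 => {[]}
  | m+1 => ((perms m) ×ˢ (Finset.range (m+1))).image (fun q => q.1.insertIdx q.2 m)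

lemma perms_perm_range : ∀ m : ℕ, ∀ l ∈ perms m, l.Perm (List.range m)
  | 0, l, hl => by simp [perms] at hl; simp [hl]
  | m+1, l, hl => by
    simp only [perms, Finset.mem_image, Finset.mem_product, Finset.mem_range] at hl
    obtain ⟨⟨l', p⟩, ⟨hl', hp⟩, rfl⟩ := hl
    have hlen : l'.length = m := (perms_perm_range m l' hl').length_eq.trans
      (List.length_range (n := m))
    have hple : p ≤ l'.length := by omega
    rw [insertIdx_eq_take_cons_drop m p l' hple]
    have s1 : (l'.take p ++ m :: l'.drop p).Perm (m :: l') := by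
      have := List.perm_middle (a := m) (l₁ := l'.take p) (l₂ := l'.drop p)
      rwa [List.take_append_drop] at this
    have s2 : (m :: l').Perm (m :: List.range m) := (perms_perm_range m l' hl').cons m
    have s3 : (m :: List.range m).Perm (List.range (m+1)) := by
      rw [List.range_succ]
      have := List.perm_middle (a := m) (l₁ := List.range m) (l₂ := ([] : List ℕ))
      simpa using this.symm
    exact (s1.trans s2).trans s3

lemma perms_length {m : ℕ} {l : List ℕ} (hl : l ∈ perms m) : l.length = m := by
  have := (perms_perm_range m l hl).length_eq
  simpa using this

lemma perms_lt {m : ℕ} {l : List ℕ} (hl : l ∈ perms m) : ∀ y ∈ l, y < m := by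
  intro y hy
  have := (perms_perm_range m l hl).mem_iff.mp hy
  simpa using this

lemma insertIdx_length_append (x : ℕ) :
    ∀ l₁ l₂ : List ℕ, List.insertIdx (l₁ ++ l₂) l₁.length x = l₁ ++ x :: l₂
  | [], l₂ => by simp
  | a :: l₁, l₂ => by
    simp only [List.length_cons, List.cons_append, List.insertIdx_succ_cons]
    rw [insertIdx_length_append x l₁ l₂]

lemma mem_perms_of_perm_range : ∀ m : ℕ, ∀ l : List ℕ, l.Perm (List.range m) → l ∈ perms m
  | 0, l, hl => by
    simp only [List.range_zero] at hl
    simp [perms, hl.eq_nil]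
  | m+1, l, hl => by
    have hm : m ∈ l := hl.mem_iff.mpr (by simp)
    obtain ⟨l₁, l₂, rfl⟩ := List.append_of_mem hm
    have h1 : (l₁ ++ l₂).Perm (List.range m) := by
      have h2 : (m :: (l₁ ++ l₂)).Perm (m :: List.range m) := by
        have s1 : (m :: (l₁ ++ l₂)).Perm (l₁ ++ m :: l₂) := List.perm_middle.symm
        have s2 : (List.range (m+1)).Perm (m :: List.range m) := by
          rw [List.range_succ]
          have := List.perm_middle (a := m) (l₁ := List.range m) (l₂ := ([] : List ℕ))
          simpa using this
        exact (s1.trans hl).trans s2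
      exact h2.cons_inv
    have hmem : l₁ ++ l₂ ∈ perms m := mem_perms_of_perm_range m _ h1
    simp only [perms, Finset.mem_image, Finset.mem_product, Finset.mem_range]
    refine ⟨⟨l₁ ++ l₂, l₁.length⟩, ⟨hmem, ?_⟩, ?_⟩
    · have := h1.length_eq
      simp at this
      omega
    · exact insertIdx_length_append m l₁ l₂

lemma insertIdx_inj_aux :
    ∀ (p p' : ℕ) (l l' : List ℕ) (x : ℕ), p ≤ l.length → p' ≤ l'.length →
      x ∉ l → x ∉ l' → l.insertIdx p x = l'.insertIdx p' x → p = p' ∧ l = l'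
  | 0, 0, l, l', x, _, _, _, _, h => by
    simp only [List.insertIdx_zero, List.cons.injEq] at h
    exact ⟨rfl, h.2⟩
  | 0, p'+1, l, a' :: l', x, _, hp', hx, hx', h => by
    simp only [List.insertIdx_zero, List.insertIdx_succ_cons, List.cons.injEq] at h
    exact absurd (h.1 ▸ List.mem_cons_self (a := a') (l := l')) hx'
  | p+1, 0, a :: l, l', x, hp, _, hx, hx', h => by
    simp only [List.insertIdx_zero, List.insertIdx_succ_cons, List.cons.injEq] at h
    exact absurd (h.1.symm ▸ List.mem_cons_self (a := a) (l := l)) hx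
  | p+1, p'+1, a :: l, a' :: l', x, hp, hp', hx, hx', h => by
    simp only [List.insertIdx_succ_cons, List.cons.injEq] at h
    obtain ⟨rfl, h2⟩ := h
    have := insertIdx_inj_aux p p' l l' x (by simpa using hp) (by simpa using hp')
      (fun hc => hx (List.mem_cons_of_mem _ hc))
      (fun hc => hx' (List.mem_cons_of_mem _ hc)) h2
    exact ⟨by omega, by rw [this.2]⟩
  | 0, p'+1, l, [], x, _, hp', _, _, _ => by simp at hp'
  | p+1, 0, [], l', x, hp, _, _, _, _ => by simp at hp
  | p+1, p'+1, [], l', x, hp, _, _, _, _ => by simp at hp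
  | p+1, p'+1, a :: l, [], x, _, hp', _, _, _ => by simp at hp'

def Cnt (k m : ℕ) : ℕ := ((perms m).filter (fun l => lstat l = k)).card

lemma cnt_succ (m k : ℕ) : Cnt k (m+1)
    = ∑ l ∈ perms m, ((Finset.range (m+1)).filter
        (fun p => lstat (l.insertIdx p m) = k)).card := by
  unfold Cnt
  show ((((perms m) ×ˢ (Finset.range (m+1))).image
      (fun q => q.1.insertIdx q.2 m)).filter (fun l => lstat l = k)).card = _
  rw [Finset.filter_image]
  rw [Finset.card_image_of_injOn]
  · rw [Finset.card_filter]
    rw [Finset.sum_product]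
    congr 1
    ext l
    rw [Finset.card_filter]
  · intro q hq q' hq' h
    simp only [Finset.coe_filter, Set.mem_setOf_eq, Finset.mem_product,
      Finset.mem_range] at hq hq'
    have h1 := perms_length hq.1.1
    have h2 := perms_length hq'.1.1
    have := insertIdx_inj_aux q.2 q'.2 q.1 q'.1 m (by omega) (by omega)
      (fun hc => absurd (perms_lt hq.1.1 m hc) (lt_irrefl m))
      (fun hc => absurd (perms_lt hq'.1.1 m hc) (lt_irrefl m)) h
    exact Prod.ext this.2 this.1

lemma sum_if_card {s : Finset (List ℕ)} {P : List ℕ → Prop} [DecidablePred P] (c : ℕ) :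
    ∑ l ∈ s, (if P l then c else 0) = c * (s.filter P).card := by
  rw [← Finset.sum_filter, Finset.sum_const, smul_eq_mul, mul_comm]

lemma cnt_even_zero (m : ℕ) (he : Even (m+1)) : Cnt 0 (m+1) = Cnt 0 m := by
  rw [cnt_succ]
  have : ∀ l ∈ perms m, ((Finset.range (m+1)).filter
      (fun p => lstat (l.insertIdx p m) = 0)).card
      = (if lstat l = 0 then 1 else 0) := by
    intro l hl
    have hlen := perms_length hl
    have := count_insert_even l m 0 (perms_lt hl) he
    rw [hlen] at this
    rw [this]
    simp
  rw [Finset.sum_congr rfl this, sum_if_card, one_mul]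
  rfl

lemma cnt_even_succ (m k : ℕ) (he : Even (m+1)) :
    Cnt (k+1) (m+1) = (k+2) * Cnt (k+1) m + (m-k) * Cnt k m := by
  rw [cnt_succ]
  have : ∀ l ∈ perms m, ((Finset.range (m+1)).filter
      (fun p => lstat (l.insertIdx p m) = (k+1))).card
      = (if lstat l = k+1 then k+2 else 0) + (if lstat l = k then m - k else 0) := by
    intro l hl
    have hlen := perms_length hl
    have h := count_insert_even l m (k+1) (perms_lt hl) he
    rw [hlen] at h
    rw [h]
    congr 1
    by_cases h1 : lstat l + 1 = k + 1
    · rw [if_pos h1, if_pos (by omega)]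
      omega
    · rw [if_neg h1, if_neg (by omega)]
  rw [Finset.sum_congr rfl this, Finset.sum_add_distrib, sum_if_card, sum_if_card]
  rfl

lemma cnt_odd_succ (m k : ℕ) (ho : ¬ Even (m+1)) :
    Cnt k (m+1) = (m+1-k) * Cnt k m + (k+1) * Cnt (k+1) m := by
  rw [cnt_succ]
  have : ∀ l ∈ perms m, ((Finset.range (m+1)).filter
      (fun p => lstat (l.insertIdx p m) = k)).card
      = (if lstat l = k then m+1-k else 0) + (if lstat l = k+1 then k+1 else 0) := by
    intro l hl
    have hlen := perms_length hl
    have h := count_insert_odd l m k (perms_lt hl) ho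
    rw [hlen] at h
    rw [h]
  rw [Finset.sum_congr rfl this, Finset.sum_add_distrib, sum_if_card, sum_if_card]
  rfl

lemma key_identity (k s c0 c1 c2 : ℕ)
    (h1 : (k+1)*c1 = (s+1)*c0) (h2 : (k+2)*c2 = s*c1) :
    (k+2)*((k+2*s+2)*c1^2 + (k+2)*c2^2)
      + (k+2*s+3)*((k+2*s+3)*c0^2 + (k+1)*c1^2)
    = (c0+c1)^2 * (k+s+2)^2 := by
  qify at h1 h2 ⊢
  have hk1 : ((k:ℚ)+1) ≠ 0 := by positivity
  have hk2 : ((k:ℚ)+2) ≠ 0 := by positivity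
  have e1 : (c1:ℚ) = (s+1)*c0/(k+1) := by field_simp; linarith
  have e2 : (c2:ℚ) = s*c1/(k+2) := by field_simp; linarith
  rw [e2, e1]
  field_simp
  ring

lemma cnt_zero (k : ℕ) : Cnt k 0 = if k = 0 then 1 else 0 := by
  unfold Cnt perms
  rcases k with _ | k
  · simp [Finset.filter_singleton, lstat]
  · simp [Finset.filter_singleton, lstat]
lemma cnt_odd_formula (n k : ℕ) (h : Cnt k (2*n) = n.choose k ^ 2 * n.factorial ^ 2)
    (h' : Cnt (k+1) (2*n) = n.choose (k+1) ^ 2 * n.factorial ^ 2) :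
    Cnt k (2*n+1) = (2*n+1-k) * (n.choose k ^ 2 * n.factorial ^ 2)
      + (k+1) * (n.choose (k+1) ^ 2 * n.factorial ^ 2) := by
  rw [cnt_odd_succ (2*n) k (by simp [Nat.even_add_one, parity_simps]), h, h']

lemma cnt_closed : ∀ n k : ℕ, Cnt k (2*n) = n.choose k ^ 2 * n.factorial ^ 2 := by
  intro n
  induction n with
  | zero =>
    intro k
    rw [show 2*0 = 0 from rfl, cnt_zero]
    cases k <;> simp
  | succ n ih =>
    have hodd : ∀ k, Cnt k (2*n+1) = (2*n+1-k) * (n.choose k ^ 2 * n.factorial ^ 2)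
        + (k+1) * (n.choose (k+1) ^ 2 * n.factorial ^ 2) := fun k =>
      cnt_odd_formula n k (ih k) (ih (k+1))
    have h2 : 2*(n+1) = (2*n+1)+1 := by ring
    have heven : Even ((2*n+1)+1) := by simp [parity_simps]
    intro k
    rw [h2]
    match k with
    | 0 =>
      rw [cnt_even_zero (2*n+1) heven, hodd 0]
      simp [Nat.factorial_succ]
      ring
    | (k+1) =>
      rw [cnt_even_succ (2*n+1) k heven, hodd (k+1), hodd k]
      by_cases hkn : k + 1 ≤ n
      · -- main case
        obtain ⟨s, hs⟩ : ∃ s, n = k + s + 1 := ⟨n - k - 1, by omega⟩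
        subst hs
        set c0 := (k+s+1).choose k with hc0
        set c1 := (k+s+1).choose (k+1) with hc1
        set c2 := (k+s+1).choose (k+2) with hc2
        have h1 : (k+1)*c1 = (s+1)*c0 := by
          have h := Nat.choose_succ_right_eq (k+s+1) k
          rw [show k+s+1-k = s+1 by omega] at h
          rw [hc0, hc1]; linarith [h]
        have h2 : (k+2)*c2 = s*c1 := by
          have h := Nat.choose_succ_right_eq (k+s+1) (k+1)
          rw [show k+s+1-(k+1) = s by omega] at h
          rw [hc1, hc2]; linarith [h]
        have key := key_identity k s c0 c1 c2 h1 h2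
        have hch : (k+s+2).choose (k+1) = c0 + c1 := Nat.choose_succ_succ (k+s+1) k
        rw [show k+s+1+1 = k+s+2 by ring, hch]
        have hf : (k+s+2).factorial = (k+s+2) * (k+s+1).factorial := Nat.factorial_succ _
        have e2 : 2*(k+s+1)+1-(k+1) = k+2*s+2 := by omega
        have e3 : 2*(k+s+1)+1-k = k+2*s+3 := by omega
        rw [e2, e3, hf]
        have keymul := congrArg (fun z => z * ((k+s+1).factorial ^ 2)) key
        ring_nf at keymul ⊢
        linarith [keymul]
      · -- degenerate: binomials vanish
        have hd1 : n.choose (k+1) = 0 := Nat.choose_eq_zero_of_lt (by omega)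
        have hd2 : n.choose (k+2) = 0 := Nat.choose_eq_zero_of_lt (by omega)
        rcases eq_or_lt_of_le (show n ≤ k by omega) with hnk | hnk
        · subst hnk
          have hd3 : (n+1).choose (n+1) = 1 := Nat.choose_self _
          rw [hd1, hd2, hd3, Nat.choose_self]
          rw [show 2*n+1-n = n+1 by omega, Nat.factorial_succ]
          ring
        · have hd0 : n.choose k = 0 := Nat.choose_eq_zero_of_lt hnk
          have hd3 : (n+1).choose (k+1) = 0 := Nat.choose_eq_zero_of_lt (by omega)
          rw [hd0, hd1, hd2, hd3]
          ring

def word (m : ℕ) (σ : Equiv.Perm (Fin m)) : List ℕ := List.ofFn (fun i => ((σ i : Fin m) : ℕ))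

lemma word_getElem? (m : ℕ) (σ : Equiv.Perm (Fin m)) (i : ℕ) :
    (word m σ)[i]? = if h : i < m then some ((σ ⟨i, h⟩ : Fin m) : ℕ) else none := by
  rw [word, List.getElem?_ofFn]

lemma word_length (m : ℕ) (σ : Equiv.Perm (Fin m)) : (word m σ).length = m := by
  simp [word]

lemma desBegE_eq_lstat (m : ℕ) (σ : Equiv.Perm (Fin m)) :
    desBegE m σ = lstat (word m σ) := by
  have hlen := word_length m σ
  rw [← sum_iopt_eq_lstat (word m σ), hlen]
  have hiopt : ∀ i : ℕ, ∀ hi : i < m, iopt (word m σ)[i]? (word m σ)[i+1]?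
      = if h2 : i + 1 < m then
          (if σ ⟨i+1, h2⟩ < σ ⟨i, hi⟩
              ∧ Even (((σ ⟨i, hi⟩ : Fin m) : ℕ) + 1) then 1 else 0)
        else 0 := by
    intro i hi
    rw [word_getElem? m σ i, word_getElem? m σ (i+1), dif_pos hi]
    by_cases h2 : i + 1 < m
    · rw [dif_pos h2, dif_pos h2]
      show ind _ _ = _
      rw [ind]
      congr 1
    · rw [dif_neg h2, dif_neg h2]
      simp [iopt]
  rw [desBegE]
  rw [show (∑ i ∈ Finset.range m, iopt (word m σ)[i]? (word m σ)[i+1]?)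
      = ((Finset.range m).filter (fun i => iopt (word m σ)[i]? (word m σ)[i+1]? = 1)).card from ?_]
  · apply Finset.card_bij (fun (p : Fin m × Fin m) _ => (p.1 : ℕ))
    · rintro ⟨p1, p2⟩ hp
      simp only [Finset.mem_filter, Finset.mem_univ, true_and] at hp
      obtain ⟨hp21, hlt, hev⟩ := hp
      simp only [Finset.mem_filter, Finset.mem_range]
      refine ⟨p1.isLt, ?_⟩
      have h2 : (p1:ℕ) + 1 < m := by
        have := p2.isLt
        omega
      rw [hiopt p1 p1.isLt, dif_pos h2]
      have e1 : (⟨(p1:ℕ)+1, h2⟩ : Fin m) = p2 := by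
        apply Fin.ext
        simp [hp21]
      have e2 : (⟨(p1:ℕ), p1.isLt⟩ : Fin m) = p1 := by
        apply Fin.ext
        simp
      rw [e1, e2]
      simp [hlt, hev]
    · rintro ⟨p1, p2⟩ hp ⟨q1, q2⟩ hq h
      simp only at h
      simp only [Finset.mem_filter, Finset.mem_univ, true_and] at hp hq
      obtain ⟨hp21, -, -⟩ := hp
      obtain ⟨hq21, -, -⟩ := hq
      have h1 : p1 = q1 := Fin.ext h
      have h2 : p2 = q2 := Fin.ext (by omega)
      rw [h1, h2]
    · intro i hi
      simp only [Finset.mem_filter, Finset.mem_range] at hi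
      obtain ⟨hi1, hi2⟩ := hi
      rw [hiopt i hi1] at hi2
      by_cases h2 : i + 1 < m
      · rw [dif_pos h2] at hi2
        by_cases hc : σ ⟨i+1, h2⟩ < σ ⟨i, hi1⟩
            ∧ Even (((σ ⟨i, hi1⟩ : Fin m) : ℕ) + 1)
        · refine ⟨(⟨i, hi1⟩, ⟨i+1, h2⟩), ?_, rfl⟩
          simp only [Finset.mem_filter, Finset.mem_univ, true_and]
          exact ⟨hc.1, hc.2⟩
        · rw [if_neg hc] at hi2
          omega
      · rw [dif_neg h2] at hi2
        omega
  · rw [Finset.card_filter]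
    apply Finset.sum_congr rfl
    intro i hi
    simp only [Finset.mem_range] at hi
    have hle : iopt (word m σ)[i]? (word m σ)[i+1]? ≤ 1 := iopt_le_one _ _
    rcases Nat.lt_or_ge (iopt (word m σ)[i]? (word m σ)[i+1]?) 1 with h | h
    · rw [if_neg (by omega)]
      omega
    · rw [if_pos (by omega)]
      omega

lemma word_mem_perms (m : ℕ) (σ : Equiv.Perm (Fin m)) : word m σ ∈ perms m := by
  apply mem_perms_of_perm_range
  apply List.perm_of_nodup_nodup_toFinset_eq
  · rw [word, List.nodup_ofFn]
    exact fun i j h => σ.injective (Fin.val_injective h)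
  · exact List.nodup_range (n := m)
  · ext y
    simp only [List.mem_toFinset, word, List.mem_ofFn, Set.mem_range, List.mem_range]
    constructor
    · rintro ⟨i, rfl⟩
      exact (σ i).isLt
    · intro hy
      exact ⟨σ.symm ⟨y, hy⟩, by simp⟩

lemma R_eq_cnt (k m : ℕ) : R k m = Cnt k m := by
  unfold R Cnt
  apply Finset.card_bij (fun σ _ => word m σ)
  · intro σ hσ
    simp only [Finset.mem_filter, Finset.mem_univ, true_and] at hσ ⊢
    exact ⟨word_mem_perms m σ, by rw [← desBegE_eq_lstat, hσ]⟩
  · intro σ1 _ σ2 _ h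
    rw [word, word, List.ofFn_inj] at h
    apply Equiv.ext
    intro i
    exact Fin.val_injective (congrFun h i)
  · intro l hl
    simp only [Finset.mem_filter] at hl
    obtain ⟨hlp, hlk⟩ := hl
    have hlen : l.length = m := perms_length hlp
    subst hlen
    have hnd : l.Nodup := ((perms_perm_range _ l hlp).nodup_iff).mpr (List.nodup_range (n := _))
    have hltm : ∀ i : Fin l.length, l.get i < l.length := fun i =>
      perms_lt hlp (l.get i) (l.get_mem i)
    set f : Fin l.length → Fin l.length := fun i => ⟨l.get i, hltm i⟩ with hf
    have hinj : Function.Injective f := by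
      intro i j hij
      apply List.nodup_iff_injective_get.mp hnd
      exact congrArg Fin.val hij
    have hbij : Function.Bijective f := Finite.injective_iff_bijective.mp hinj
    refine ⟨Equiv.ofBijective f hbij, ?_, ?_⟩
    · simp only [Finset.mem_filter, Finset.mem_univ, true_and]
      have hw : word l.length (Equiv.ofBijective f hbij) = l := by
        rw [word]
        exact List.ofFn_get l
      rw [desBegE_eq_lstat, hw, hlk]
    · rw [word]
      exact List.ofFn_get l


theorem stmt_3 (n k : ℕ) (hn : 1 ≤ n) (hk : k ≤ n) :
    R k (2*n) = (Nat.choose n k)^2 * (Nat.factorial n)^2 := by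
  rw [R_eq_cnt, cnt_closed]

end DescentParity
end
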